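/- Let (P^n_t)_{t≥0}, n ∈ ℕ, be strongly continuous semigroups on a Banach space Z with generators A^n, and suppose there are uniform constants M ≥ 1 and ω ∈ ℝ with ‖P^n_t‖_{L(Z)} ≤ M exp(ωt) for all t ≥ 0 and all n. Let D ⊆ ∩_n dom(A^n) be a subset such that: (i) the linear span of D is dense in Z; (ii) there is a norm ‖·‖_D on span(D) such that P^m_u f ∈ ∩_n dom(A^n) for all m, u and, for each f ∈ D and each t > 0, there is a sequence a^f_{nm} with a^f_{nm} → 0 as n, m → ∞ and ‖A^n P^m_u f − A^m P^m_u f‖ ≤ a^f_{nm} ‖f‖_D for all n, m and all 0 ≤ u ≤ t. Then there exists a strongly continuous semigroup (P^∞_t)_{t≥0} on Z with ‖P^∞_t‖_{L(Z)} ≤ M exp(ωt) such that lim_{n→∞} P^n_t f = P^∞_t f for all f ∈ Z, uniformly on compact intervals in t. If in addition Z = 𝓑^ρ(X) for a weighted space (X, ρ) and every (P^n_t) is a generalized Feller semigroup, then (P^∞_t) is a generalized Feller semigroup. -/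

import Mathlib

open MeasureTheory Filter Set Topology

namespace GenFeller

variable {X : Type*} [TopologicalSpace X]

/-- `ρ` is an admissible weight function on `X`: positive with compact sublevel sets. -/
def Admissible (ρ : X → ℝ) : Prop :=
  (∀ x, 0 < ρ x) ∧ ∀ R : ℝ, 0 < R → IsCompact {x : X | ρ x ≤ R}

/-- The weighted sup-norm `‖f‖_ρ = sup_x ρ(x)⁻¹ |f x|`. -/
noncomputable def rnorm (ρ : X → ℝ) (f : X → ℝ) : ℝ :=
  sSup (Set.range fun x => (ρ x)⁻¹ * |f x|)

/-- `f ∈ B^ρ(X)`. -/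
def MemB (ρ : X → ℝ) (f : X → ℝ) : Prop :=
  ∃ C : ℝ, ∀ x, |f x| ≤ C * ρ x

/-- `f ∈ 𝓑^ρ(X)`: `f ∈ B^ρ(X)` and `f` lies in the `‖·‖_ρ`-closure of the bounded
continuous functions. -/
def MemCb (ρ : X → ℝ) (f : X → ℝ) : Prop :=
  MemB ρ f ∧ ∀ ε : ℝ, 0 < ε → ∃ g : X → ℝ, Continuous g ∧ (∃ C : ℝ, ∀ x, |g x| ≤ C) ∧
    ∀ x, |f x - g x| ≤ ε * ρ x

/-- `T` is linear on `𝓑^ρ(X)`. -/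
def LinOn (ρ : X → ℝ) (T : (X → ℝ) → (X → ℝ)) : Prop :=
  (∀ f g, MemCb ρ f → MemCb ρ g → T (f + g) = T f + T g) ∧
  (∀ (c : ℝ) (f), MemCb ρ f → T (c • f) = c • T f)

/-- `‖T f‖_ρ ≤ C ‖f‖_ρ` for all `f ∈ 𝓑^ρ(X)`, stated pointwise. -/
def OpBound (ρ : X → ℝ) (T : (X → ℝ) → (X → ℝ)) (C : ℝ) : Prop :=
  ∀ f, MemCb ρ f → ∀ x, |T f x| ≤ C * rnorm ρ f * ρ x

/-- A generalized Feller semigroup on `𝓑^ρ(X)` (properties F1–F5). -/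
structure IsGenFeller (ρ : X → ℝ) (P : ℝ → (X → ℝ) → (X → ℝ)) : Prop where
  maps : ∀ t, 0 ≤ t → ∀ f, MemCb ρ f → MemCb ρ (P t f)
  lin : ∀ t, 0 ≤ t → LinOn ρ (P t)
  id0 : ∀ f, MemCb ρ f → P 0 f = f
  law : ∀ s t, 0 ≤ s → 0 ≤ t → ∀ f, MemCb ρ f → P (t + s) f = P t (P s f)
  ptconv : ∀ f, MemCb ρ f → ∀ x,
    Tendsto (fun t => P t f x) (nhdsWithin 0 (Set.Ioi 0)) (nhds (f x))
  locbdd : ∃ C : ℝ, ∃ ε : ℝ, 0 < ε ∧ ∀ t ∈ Set.Icc (0:ℝ) ε, OpBound ρ (P t) C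
  pos : ∀ t, 0 ≤ t → ∀ f, MemCb ρ f → (∀ x, 0 ≤ f x) → ∀ x, 0 ≤ P t f x

/-- `‖P_t‖ ≤ M exp(ω t)` for all `t ≥ 0`. -/
def GrowthBound (ρ : X → ℝ) (P : ℝ → (X → ℝ) → (X → ℝ)) (M ω : ℝ) : Prop :=
  ∀ t, 0 ≤ t → OpBound ρ (P t) (M * Real.exp (ω * t))

/-- `g` is the value of the generator of `P` at `f` (limit in `‖·‖_ρ`). -/
def IsGenerator (ρ : X → ℝ) (P : ℝ → (X → ℝ) → (X → ℝ)) (f g : X → ℝ) : Prop :=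
  MemCb ρ f ∧ MemCb ρ g ∧
  Tendsto (fun t : ℝ => rnorm ρ (fun x => t⁻¹ * (P t f x - f x) - g x))
    (nhdsWithin 0 (Set.Ioi 0)) (nhds 0)

/-- `D` is a set of elements of `𝓑^ρ(X)` which is `‖·‖_ρ`-dense in it. -/
def DenseIn (ρ : X → ℝ) (D : Set (X → ℝ)) : Prop :=
  (∀ f ∈ D, MemCb ρ f) ∧
  ∀ f, MemCb ρ f → ∀ ε : ℝ, 0 < ε → ∃ h ∈ D, rnorm ρ (fun x => f x - h x) ≤ ε

/-- Operator norm of a linear functional on `𝓑^ρ(X)`. -/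
noncomputable def opNormF (ρ : X → ℝ) (ℓ : (X → ℝ) → ℝ) : ℝ :=
  sSup {r : ℝ | ∃ f, MemCb ρ f ∧ rnorm ρ f ≤ 1 ∧ r = |ℓ f|}

/-- Operator norm of an operator on `𝓑^ρ(X)`. -/
noncomputable def opNormOp (ρ : X → ℝ) (B : (X → ℝ) → (X → ℝ)) : ℝ :=
  sSup {r : ℝ | ∃ f, MemCb ρ f ∧ rnorm ρ f ≤ 1 ∧ r = rnorm ρ (B f)}

end GenFeller

open Filter Set

universe u v


section AuxSemigroup

variable {Z : Type*} [NormedAddCommGroup Z] [NormedSpace ℝ Z]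

lemma aux_opbd (P : ℕ → ℝ → Z →L[ℝ] Z) (M ω : ℝ) (hM0 : 0 ≤ M)
    (hgb : ∀ n t, 0 ≤ t → ‖P n t‖ ≤ M * Real.exp (ω * t))
    (n : ℕ) {s S : ℝ} (h0 : 0 ≤ s) (hS : s ≤ S) :
    ‖P n s‖ ≤ M * Real.exp (|ω| * S) := by
  refine (hgb n s h0).trans ?_
  have h1 : ω * s ≤ |ω| * S :=
    (mul_le_mul_of_nonneg_right (le_abs_self ω) h0).trans
      (mul_le_mul_of_nonneg_left hS (abs_nonneg ω))
  exact mul_le_mul_of_nonneg_left (Real.exp_le_exp.2 h1) hM0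

lemma aux_orbit (P : ℕ → ℝ → Z →L[ℝ] Z) (M ω : ℝ) (hM0 : 0 ≤ M)
    (hlaw : ∀ n s t, 0 ≤ s → 0 ≤ t → P n (t + s) = (P n t).comp (P n s))
    (hcont : ∀ n (f : Z), Tendsto (fun t => P n t f) (nhdsWithin 0 (Set.Ioi 0)) (nhds f))
    (hgb : ∀ n t, 0 ≤ t → ‖P n t‖ ≤ M * Real.exp (ω * t))
    (n : ℕ) (v : Z) {s₀ : ℝ} (hs₀ : 0 ≤ s₀) :
    Tendsto (fun s => P n s v) (nhdsWithin s₀ (Set.Ici 0)) (nhds (P n s₀ v)) := by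
  rw [Metric.tendsto_nhdsWithin_nhds]
  intro ε hε
  set C : ℝ := M * Real.exp (|ω| * (s₀ + 1)) with hC
  have hCpos : 0 < C ∨ True := Or.inr trivial
  have hCnn : 0 ≤ C := mul_nonneg hM0 (Real.exp_nonneg _)
  have hCb : ∀ s, 0 ≤ s → s ≤ s₀ + 1 → ‖P n s‖ ≤ C := fun s h1 h2 =>
    aux_opbd P M ω hM0 hgb n h1 h2
  obtain ⟨δ₁, hδ₁, hδ⟩ := (Metric.tendsto_nhdsWithin_nhds.1 (hcont n v)) (ε / (C + 1))
    (div_pos hε (by linarith))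
  refine ⟨min δ₁ 1, lt_min hδ₁ one_pos, fun s hs hd => ?_⟩
  have hs0 : (0:ℝ) ≤ s := hs
  have hdist : |s - s₀| < min δ₁ 1 := by simpa [Real.dist_eq] using hd
  rcases lt_trichotomy s s₀ with h | h | h
  · -- s < s₀
    have h1 : s₀ = s + (s₀ - s) := by ring
    have hh0 : 0 < s₀ - s := by linarith
    have := hlaw n (s₀ - s) s hh0.le hs0
    have hrw : P n s₀ v = P n s (P n (s₀ - s) v) := by
      conv_lhs => rw [h1]
      rw [this]; rfl
    rw [Real.dist_eq] at *
    have hdd : dist (P n (s₀ - s) v) v < ε / (C + 1) := by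
      refine hδ hh0 ?_
      rw [Real.dist_eq]
      have : |s₀ - s| < min δ₁ 1 := by rw [abs_sub_comm]; exact hdist
      simpa using this.trans_le (min_le_left _ _)
    have : dist (P n s v) (P n s₀ v) = ‖P n s (v - P n (s₀ - s) v)‖ := by
      rw [hrw, dist_eq_norm, ← map_sub]
    rw [this]
    calc ‖P n s (v - P n (s₀ - s) v)‖ ≤ C * ‖v - P n (s₀ - s) v‖ :=
          le_trans ((P n s).le_opNorm _) (mul_le_mul_of_nonneg_right
            (hCb s hs0 (by linarith)) (norm_nonneg _))
      _ < (C + 1) * (ε / (C + 1)) := by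
          have h2 : ‖v - P n (s₀ - s) v‖ < ε / (C + 1) := by
            rw [norm_sub_rev]; simpa [dist_eq_norm] using hdd
          have h3 : C * ‖v - P n (s₀ - s) v‖ ≤ (C+1) * ‖v - P n (s₀ - s) v‖ :=
            mul_le_mul_of_nonneg_right (by linarith) (norm_nonneg _)
          exact h3.trans_lt (mul_lt_mul_of_pos_left h2 (by linarith))
      _ = ε := by field_simp
  · simp [h, hε]
  · -- s₀ < s
    have hh0 : 0 < s - s₀ := by linarith
    have := hlaw n (s - s₀) s₀ hh0.le hs₀
    have hrw : P n s v = P n s₀ (P n (s - s₀) v) := by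
      have h1 : s = s₀ + (s - s₀) := by ring
      conv_lhs => rw [h1]
      rw [this]; rfl
    have hdd : dist (P n (s - s₀) v) v < ε / (C + 1) := by
      refine hδ hh0 ?_
      rw [Real.dist_eq]
      have := hdist.trans_le (min_le_left _ _)
      rw [Real.dist_eq] at *
      simpa using this
    rw [hrw, dist_eq_norm, ← map_sub]
    calc ‖P n s₀ (P n (s - s₀) v - v)‖ ≤ C * ‖P n (s - s₀) v - v‖ :=
          le_trans ((P n s₀).le_opNorm _) (mul_le_mul_of_nonneg_right
            (hCb s₀ hs₀ (by linarith)) (norm_nonneg _))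
      _ < (C + 1) * (ε / (C + 1)) := by
          have h2 : ‖P n (s - s₀) v - v‖ < ε / (C + 1) := by
            simpa [dist_eq_norm] using hdd
          have h3 : C * ‖P n (s - s₀) v - v‖ ≤ (C+1) * ‖P n (s - s₀) v - v‖ :=
            mul_le_mul_of_nonneg_right (by linarith) (norm_nonneg _)
          exact h3.trans_lt (mul_lt_mul_of_pos_left h2 (by linarith))
      _ = ε := by field_simp

lemma aux_joint (P : ℕ → ℝ → Z →L[ℝ] Z) (M ω : ℝ) (hM0 : 0 ≤ M)
    (hlaw : ∀ n s t, 0 ≤ s → 0 ≤ t → P n (t + s) = (P n t).comp (P n s))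
    (hcont : ∀ n (f : Z), Tendsto (fun t => P n t f) (nhdsWithin 0 (Set.Ioi 0)) (nhds f))
    (hgb : ∀ n t, 0 ≤ t → ‖P n t‖ ≤ M * Real.exp (ω * t))
    (n : ℕ) {l : Filter ℝ} {s : ℝ → ℝ} {s₀ : ℝ} (hs₀ : 0 ≤ s₀)
    {b : ℝ → Z} {v : Z} {C : ℝ}
    (hs : Tendsto s l (nhdsWithin s₀ (Set.Ici 0))) (hb : Tendsto b l (nhds v))
    (hC : ∀ᶠ y in l, ‖P n (s y)‖ ≤ C) :
    Tendsto (fun y => P n (s y) (b y)) l (nhds (P n s₀ v)) := by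
  have h1 : Tendsto (fun y => P n (s y) (b y - v)) l (nhds 0) := by
    apply squeeze_zero_norm' (a := fun y => C * ‖b y - v‖)
    · filter_upwards [hC] with y hy
      exact le_trans ((P n (s y)).le_opNorm _) (mul_le_mul_of_nonneg_right hy (norm_nonneg _))
    · have : Tendsto (fun y => ‖b y - v‖) l (nhds 0) := by
        rw [← tendsto_zero_iff_norm_tendsto_zero]
        have h0 : Tendsto (fun y => b y - v) l (nhds (v - v)) := hb.sub tendsto_const_nhds
        rwa [sub_self] at h0
      simpa using this.const_mul C
  have h2 : Tendsto (fun y => P n (s y) v) l (nhds (P n s₀ v)) :=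
    (aux_orbit P M ω hM0 hlaw hcont hgb n v hs₀).comp hs
  have := h1.add h2
  simp only [zero_add] at this
  convert this using 2 with y
  rw [← map_add]
  congr 1
  abel

lemma aux_key (P : ℕ → ℝ → Z →L[ℝ] Z) (M ω : ℝ) (hM0 : 0 ≤ M)
    (hid : ∀ n, P n 0 = ContinuousLinearMap.id ℝ Z)
    (hlaw : ∀ n s t, 0 ≤ s → 0 ≤ t → P n (t + s) = (P n t).comp (P n s))
    (hcont : ∀ n (f : Z), Tendsto (fun t => P n t f) (nhdsWithin 0 (Set.Ioi 0)) (nhds f))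
    (hgb : ∀ n t, 0 ≤ t → ‖P n t‖ ≤ M * Real.exp (ω * t))
    (n m : ℕ) {t : ℝ} (ht : 0 < t) (f : Z) (An Am : ℝ → Z)
    (hAn : ∀ u, 0 ≤ u → Tendsto (fun h : ℝ => h⁻¹ • (P n h (P m u f) - P m u f))
      (nhdsWithin 0 (Set.Ioi 0)) (nhds (An u)))
    (hAm : ∀ u, 0 ≤ u → Tendsto (fun h : ℝ => h⁻¹ • (P m h (P m u f) - P m u f))
      (nhdsWithin 0 (Set.Ioi 0)) (nhds (Am u)))
    (K : ℝ) (hK : ∀ u, 0 ≤ u → u ≤ t → ‖An u - Am u‖ ≤ K) :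
    ‖P n t f - P m t f‖ ≤ M * Real.exp (|ω| * t) * K * t := by
  set C : ℝ := M * Real.exp (|ω| * t) with hCdef
  have hCnn : 0 ≤ C := mul_nonneg hM0 (Real.exp_nonneg _)
  have hCb : ∀ s, 0 ≤ s → s ≤ t → ‖P n s‖ ≤ C := fun s h1 h2 =>
    aux_opbd P M ω hM0 hgb n h1 h2
  set g : ℝ → Z := fun u => P n (t - u) (P m u f) with hg
  -- continuity of g on Icc 0 t
  have hgcont : ContinuousOn g (Set.Icc 0 t) := by
    intro u hu
    have hu0 : 0 ≤ u := hu.1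
    have hut : u ≤ t := hu.2
    have hs : Tendsto (fun y => t - y) (nhdsWithin u (Set.Icc 0 t))
        (nhdsWithin (t - u) (Set.Ici 0)) := by
      rw [tendsto_nhdsWithin_iff]
      constructor
      · exact ((tendsto_const_nhds.sub tendsto_id).mono_left nhdsWithin_le_nhds)
      · filter_upwards [self_mem_nhdsWithin] with y hy
        exact sub_nonneg.2 hy.2
    have hb : Tendsto (fun y => P m y f) (nhdsWithin u (Set.Icc 0 t)) (nhds (P m u f)) :=
      (aux_orbit P M ω hM0 hlaw hcont hgb m f hu0).mono_left
        (nhdsWithin_mono _ (fun y hy => hy.1))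
    have hC : ∀ᶠ y in nhdsWithin u (Set.Icc 0 t), ‖P n (t - y)‖ ≤ C := by
      filter_upwards [self_mem_nhdsWithin] with y hy
      exact hCb _ (sub_nonneg.2 hy.2) (by linarith [hy.1])
    exact aux_joint P M ω hM0 hlaw hcont hgb n (sub_nonneg.2 hut) hs hb hC
  -- derivative of g on Ico 0 t
  set g' : ℝ → Z := fun u => P n (t - u) (Am u - An u) with hg'
  have hgderiv : ∀ u ∈ Set.Ico 0 t, HasDerivWithinAt g (g' u) (Set.Ici u) u := by
    intro u hu
    have hu0 : 0 ≤ u := hu.1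
    have hut : u < t := hu.2
    rw [hasDerivWithinAt_iff_tendsto_slope, Set.Ici_sdiff_left]
    set w : Z := P m u f with hw
    set φ : ℝ → Z := fun h => h⁻¹ • (P m h w - w) - h⁻¹ • (P n h w - w) with hφ
    have hsub : Tendsto (fun y : ℝ => y - u) (nhdsWithin u (Set.Ioi u))
        (nhdsWithin 0 (Set.Ioi 0)) := by
      rw [tendsto_nhdsWithin_iff]
      constructor
      · have : Tendsto (fun y : ℝ => y - u) (nhds u) (nhds (u - u)) :=
          tendsto_id.sub tendsto_const_nhds
        rw [sub_self] at this
        exact this.mono_left nhdsWithin_le_nhds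
      · filter_upwards [self_mem_nhdsWithin] with y hy
        exact sub_pos.2 (show u < y from hy)
    have hφt : Tendsto φ (nhdsWithin 0 (Set.Ioi 0)) (nhds (Am u - An u)) :=
      (hAm u hu0).sub (hAn u hu0)
    have hs : Tendsto (fun y => t - y) (nhdsWithin u (Set.Ioi u))
        (nhdsWithin (t - u) (Set.Ici 0)) := by
      rw [tendsto_nhdsWithin_iff]
      constructor
      · exact ((tendsto_const_nhds.sub tendsto_id).mono_left nhdsWithin_le_nhds)
      · have hev : ∀ᶠ y in nhdsWithin u (Set.Ioi u), y < t :=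
          eventually_nhdsWithin_of_eventually_nhds (Filter.Tendsto.eventually_lt_const hut tendsto_id)
        filter_upwards [hev] with y hy
        exact le_of_lt (sub_pos.2 hy)
    have hCev : ∀ᶠ y in nhdsWithin u (Set.Ioi u), ‖P n (t - y)‖ ≤ C := by
      have hev : ∀ᶠ y in nhdsWithin u (Set.Ioi u), y < t :=
        eventually_nhdsWithin_of_eventually_nhds (Filter.Tendsto.eventually_lt_const hut tendsto_id)
      filter_upwards [hev, self_mem_nhdsWithin] with y hy1 hy2
      exact hCb _ (le_of_lt (sub_pos.2 hy1)) (by linarith [le_of_lt (lt_of_le_of_lt hu0 hy2)])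
    have hmain : Tendsto (fun y => P n (t - y) (φ (y - u))) (nhdsWithin u (Set.Ioi u))
        (nhds (P n (t - u) (Am u - An u))) :=
      aux_joint P M ω hM0 hlaw hcont hgb n (le_of_lt (sub_pos.2 hut)) hs
        (hφt.comp hsub) hCev
    refine hmain.congr' ?_
    have hev : ∀ᶠ y in nhdsWithin u (Set.Ioi u), y < t :=
      eventually_nhdsWithin_of_eventually_nhds (Filter.Tendsto.eventually_lt_const hut tendsto_id)
    filter_upwards [hev, self_mem_nhdsWithin] with y hyt hyu
    have hyu' : u < y := hyu
    have h0 : 0 < y - u := sub_pos.2 hyu'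
    have hty : 0 ≤ t - y := le_of_lt (sub_pos.2 hyt)
    -- P m y f = P m (y - u) w
    have e1 : P m y f = P m (y - u) w := by
      have := hlaw m u (y - u) hu0 h0.le
      have hyy : y = (y - u) + u := by ring
      conv_lhs => rw [hyy]
      rw [this]; rfl
    -- P n (t - u) w = P n (t - y) (P n (y - u) w)
    have e2 : P n (t - u) w = P n (t - y) (P n (y - u) w) := by
      have := hlaw n (y - u) (t - y) h0.le hty
      have htt : t - u = (t - y) + (y - u) := by ring
      conv_lhs => rw [htt]
      rw [this]; rfl
    -- slope computation
    show P n (t - y) (φ (y - u)) = slope g u y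
    rw [slope_def_module]
    have : g y - g u = P n (t - y) (P m (y - u) w - P n (y - u) w) := by
      simp only [hg]
      rw [e1, e2, map_sub]
    rw [this, ← _root_.map_smul]
    congr 1
    simp only [hφ, smul_sub]
    abel
  -- norm bound on derivative
  have hbound : ∀ u ∈ Set.Ico 0 t, ‖g' u‖ ≤ C * K := by
    intro u hu
    have h1 : ‖Am u - An u‖ ≤ K := by rw [norm_sub_rev]; exact hK u hu.1 hu.2.le
    calc ‖P n (t - u) (Am u - An u)‖ ≤ ‖P n (t - u)‖ * ‖Am u - An u‖ :=
          (P n (t - u)).le_opNorm _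
      _ ≤ C * K := mul_le_mul (hCb _ (by linarith [hu.2.le]) (by linarith [hu.1]))
          h1 (norm_nonneg _) hCnn
  have := norm_image_sub_le_of_norm_deriv_right_le_segment hgcont hgderiv hbound t
    ⟨le_of_lt ht, le_refl t⟩
  have hg0 : g 0 = P n t f := by
    simp only [hg, sub_zero]
    rw [hid m]; rfl
  have hgt : g t = P m t f := by
    simp only [hg, sub_self]
    rw [hid n]; rfl
  rw [hg0, hgt, sub_zero] at this
  rw [norm_sub_rev]
  calc ‖P m t f - P n t f‖ ≤ C * K * t := this
    _ = M * Real.exp (|ω| * t) * K * t := by rw [hCdef]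

end AuxSemigroup


/-- Theorem 3.2 (generalized approximation theorem): given strongly continuous
semigroups `(P^n_t)` on a Banach space `Z` with uniform growth bound `M exp(ω t)`
and a subset `D ⊆ ∩_n dom(A^n)` with dense linear span, equipped with a norm `nD` on
its span, such that `P^m_u f ∈ ∩_n dom(A^n)` and
`‖A^n P^m_u f − A^m P^m_u f‖ ≤ a^f_{nm} ‖f‖_D` uniformly for `0 ≤ u ≤ t`, with
`a^f_{nm} → 0`, there exists a strongly continuous limiting semigroup `(P^∞_t)` on
`Z` with the same growth bound such that `P^n_t f → P^∞_t f` uniformly on compact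
time intervals.  If moreover `Z = 𝓑^ρ(X)` for a weighted space `(X, ρ)` and each
`P^n` is positive (hence a generalized Feller semigroup), then so is the limit. -/
theorem approximation_semigroups_generalized
    {Z : Type v} [NormedAddCommGroup Z] [NormedSpace ℝ Z] [CompleteSpace Z]
    (P : ℕ → ℝ → Z →L[ℝ] Z)
    (hid : ∀ n, P n 0 = ContinuousLinearMap.id ℝ Z)
    (hlaw : ∀ n s t, 0 ≤ s → 0 ≤ t → P n (t + s) = (P n t).comp (P n s))
    (hcont : ∀ n (f : Z), Tendsto (fun t => P n t f) (nhdsWithin 0 (Set.Ioi 0)) (nhds f))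
    (M ω : ℝ) (hM : 1 ≤ M)
    (hgb : ∀ n t, 0 ≤ t → ‖P n t‖ ≤ M * Real.exp (ω * t))
    (D : Set Z) (hDdense : Dense ((Submodule.span ℝ D : Submodule ℝ Z) : Set Z))
    (A : ℕ → Z → Z)
    (hgen : ∀ n, ∀ f ∈ D, Tendsto (fun t : ℝ => t⁻¹ • (P n t f - f))
      (nhdsWithin 0 (Set.Ioi 0)) (nhds (A n f)))
    (hgen' : ∀ n m u, 0 ≤ u → ∀ f ∈ D,
      Tendsto (fun t : ℝ => t⁻¹ • (P n t (P m u f) - P m u f))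
        (nhdsWithin 0 (Set.Ioi 0)) (nhds (A n (P m u f))))
    (nD : Z → ℝ)
    (hnD0 : ∀ f ∈ Submodule.span ℝ D, 0 ≤ nD f)
    (hnDdef : ∀ f ∈ Submodule.span ℝ D, nD f = 0 → f = 0)
    (hnDsmul : ∀ (c : ℝ), ∀ f ∈ Submodule.span ℝ D, nD (c • f) = |c| * nD f)
    (hnDtri : ∀ f ∈ Submodule.span ℝ D, ∀ g ∈ Submodule.span ℝ D,
      nD (f + g) ≤ nD f + nD g)
    (ha : ∀ f ∈ D, ∀ t : ℝ, 0 < t → ∃ a : ℕ → ℕ → ℝ,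
      Tendsto (fun p : ℕ × ℕ => a p.1 p.2) atTop (nhds 0) ∧
      ∀ n m u, 0 ≤ u → u ≤ t →
        ‖A n (P m u f) - A m (P m u f)‖ ≤ a n m * nD f) :
    ∃ Pinf : ℝ → Z →L[ℝ] Z,
      Pinf 0 = ContinuousLinearMap.id ℝ Z ∧
      (∀ s t, 0 ≤ s → 0 ≤ t → Pinf (t + s) = (Pinf t).comp (Pinf s)) ∧
      (∀ f : Z, Tendsto (fun t => Pinf t f) (nhdsWithin 0 (Set.Ioi 0)) (nhds f)) ∧
      (∀ t, 0 ≤ t → ‖Pinf t‖ ≤ M * Real.exp (ω * t)) ∧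
      (∀ f : Z, ∀ T : ℝ, 0 < T → ∀ ε : ℝ, 0 < ε → ∃ N : ℕ, ∀ n ≥ N,
        ∀ t ∈ Set.Icc (0:ℝ) T, ‖P n t f - Pinf t f‖ ≤ ε) ∧
      (∀ (X : Type u) (_ : TopologicalSpace X) (ρ : X → ℝ) (ι : Z → X → ℝ),
        GenFeller.Admissible ρ →
        (∀ f g : Z, ι (f + g) = ι f + ι g) →
        (∀ (c : ℝ) (f : Z), ι (c • f) = c • ι f) →
        (∀ f : Z, GenFeller.MemCb ρ (ι f)) →
        (∀ f : Z, GenFeller.rnorm ρ (ι f) = ‖f‖) →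
        (∀ g : X → ℝ, GenFeller.MemCb ρ g → ∃ f : Z, ι f = g) →
        (∀ n t, 0 ≤ t → ∀ f : Z, (∀ x, 0 ≤ ι f x) → ∀ x, 0 ≤ ι (P n t f) x) →
        ∀ t, 0 ≤ t → ∀ f : Z, (∀ x, 0 ≤ ι f x) → ∀ x, 0 ≤ ι (Pinf t f) x) := by
  have hM0 : (0:ℝ) ≤ M := le_trans zero_le_one hM
  -- the uniform Cauchy property
  set Cu : Z → Prop := fun f => ∀ T : ℝ, 0 < T → ∀ ε : ℝ, 0 < ε → ∃ N : ℕ,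
    ∀ n ≥ N, ∀ m ≥ N, ∀ t ∈ Set.Icc (0:ℝ) T, ‖P n t f - P m t f‖ ≤ ε with hCu
  -- step 1: Cu holds on D
  have hCuD : ∀ f ∈ D, Cu f := by
    intro f hf T hT ε hε
    obtain ⟨a, hat, hab⟩ := ha f hf T hT
    have hnDf : 0 ≤ nD f := hnD0 f (Submodule.subset_span hf)
    set CT : ℝ := M * Real.exp (|ω| * T) with hCT
    have hCTpos : 0 < CT := mul_pos (lt_of_lt_of_le one_pos hM) (Real.exp_pos _)
    set δ : ℝ := ε / (CT * T * (nD f + 1)) with hδ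
    have hXpos : 0 < CT * T * (nD f + 1) := by positivity
    have hδpos : 0 < δ := div_pos hε hXpos
    have hev : ∀ᶠ p : ℕ × ℕ in atTop, |a p.1 p.2| < δ := by
      have := Metric.tendsto_nhds.1 hat δ hδpos
      filter_upwards [this] with p hp
      simpa [Real.dist_eq] using hp
    obtain ⟨p₀, hp₀⟩ := eventually_atTop.1 hev
    refine ⟨max p₀.1 p₀.2, fun n hn m hm t htm => ?_⟩
    rcases eq_or_lt_of_le htm.1 with h0 | h0
    · rw [← h0]
      simp [hid, hε.le]
    · have hpnm : p₀ ≤ (n, m) :=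
        ⟨le_trans (le_max_left _ _) hn, le_trans (le_max_right _ _) hm⟩
      have hknm : |a n m| < δ := hp₀ (n, m) hpnm
      have hKb : ∀ u, 0 ≤ u → u ≤ t → ‖A n (P m u f) - A m (P m u f)‖ ≤ |a n m| * nD f :=
        fun u hu hut => (hab n m u hu (hut.trans htm.2)).trans
          (mul_le_mul_of_nonneg_right (le_abs_self _) hnDf)
      have hkey := aux_key P M ω hM0 hid hlaw hcont hgb n m h0 f
        (fun u => A n (P m u f)) (fun u => A m (P m u f))
        (fun u hu => hgen' n m u hu f hf) (fun u hu => hgen' m m u hu f hf)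
        (|a n m| * nD f) hKb
      refine hkey.trans ?_
      have h1 : M * Real.exp (|ω| * t) ≤ CT := by
        rw [hCT]
        exact mul_le_mul_of_nonneg_left (Real.exp_le_exp.2
          (mul_le_mul_of_nonneg_left htm.2 (abs_nonneg ω))) hM0
      have h2 : |a n m| * nD f ≤ δ * (nD f + 1) :=
        mul_le_mul hknm.le (by linarith) hnDf hδpos.le
      calc M * Real.exp (|ω| * t) * (|a n m| * nD f) * t
          ≤ CT * (δ * (nD f + 1)) * T := by
            apply mul_le_mul (mul_le_mul h1 h2 (by positivity) hCTpos.le) htm.2 h0.le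
            positivity
        _ = (CT * T * (nD f + 1)) * δ := by ring
        _ = ε := by
            rw [hδ]
            field_simp
  -- step 2: Cu holds on the span of D
  have hCuSpan : ∀ f ∈ Submodule.span ℝ D, Cu f := by
    intro f hf
    induction hf using Submodule.span_induction with
    | mem x hx => exact hCuD x hx
    | zero =>
      intro T hT ε hε
      exact ⟨0, fun n _ m _ t _ => by simp [hε.le]⟩
    | add x y hx hy hCx hCy =>
      intro T hT ε hε
      obtain ⟨N1, h1⟩ := hCx T hT (ε/2) (by linarith)
      obtain ⟨N2, h2⟩ := hCy T hT (ε/2) (by linarith)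
      refine ⟨max N1 N2, fun n hn m hm t htm => ?_⟩
      have e1 := h1 n (le_trans (le_max_left _ _) hn) m (le_trans (le_max_left _ _) hm) t htm
      have e2 := h2 n (le_trans (le_max_right _ _) hn) m (le_trans (le_max_right _ _) hm) t htm
      have : P n t (x + y) - P m t (x + y) = (P n t x - P m t x) + (P n t y - P m t y) := by
        rw [map_add, map_add]; abel
      rw [this]
      calc ‖(P n t x - P m t x) + (P n t y - P m t y)‖
          ≤ ‖P n t x - P m t x‖ + ‖P n t y - P m t y‖ := norm_add_le _ _
        _ ≤ ε := by linarith
    | smul c x hx hCx =>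
      intro T hT ε hε
      rcases eq_or_ne c 0 with hc | hc
      · refine ⟨0, fun n _ m _ t _ => ?_⟩
        simp [hc, hε.le]
      · obtain ⟨N, h⟩ := hCx T hT (ε/|c|) (div_pos hε (abs_pos.2 hc))
        refine ⟨N, fun n hn m hm t htm => ?_⟩
        have : P n t (c • x) - P m t (c • x) = c • (P n t x - P m t x) := by
          rw [_root_.map_smul, _root_.map_smul, smul_sub]
        rw [this, norm_smul, Real.norm_eq_abs]
        calc |c| * ‖P n t x - P m t x‖ ≤ |c| * (ε/|c|) :=
              mul_le_mul_of_nonneg_left (h n hn m hm t htm) (abs_nonneg c)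
          _ = ε := by field_simp
  -- step 3: Cu holds everywhere by density
  have hCuAll : ∀ f : Z, Cu f := by
    intro f T hT ε hε
    set CT : ℝ := M * Real.exp (|ω| * T) with hCT
    have hCTpos : 0 < CT := mul_pos (lt_of_lt_of_le one_pos hM) (Real.exp_pos _)
    obtain ⟨g, hgmem, hgd⟩ := hDdense.exists_dist_lt f (show (0:ℝ) < ε/(3*CT) by positivity)
    obtain ⟨N, hN⟩ := hCuSpan g hgmem T hT (ε/3) (by linarith)
    refine ⟨N, fun n hn m hm t htm => ?_⟩
    have hfg : ‖f - g‖ ≤ ε/(3*CT) := by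
      rw [← dist_eq_norm]; exact hgd.le
    have hbnd : ∀ k : ℕ, ‖P k t (f - g)‖ ≤ ε/3 := by
      intro k
      calc ‖P k t (f - g)‖ ≤ ‖P k t‖ * ‖f - g‖ := (P k t).le_opNorm _
        _ ≤ CT * (ε/(3*CT)) := mul_le_mul
            (aux_opbd P M ω hM0 hgb k htm.1 htm.2) hfg (norm_nonneg _) hCTpos.le
        _ = ε/3 := by field_simp
    have hsplit : P n t f - P m t f
        = P n t (f - g) + (P n t g - P m t g) - P m t (f - g) := by
      rw [map_sub, map_sub]; abel
    rw [hsplit]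
    have := hN n hn m hm t htm
    calc ‖P n t (f - g) + (P n t g - P m t g) - P m t (f - g)‖
        ≤ ‖P n t (f - g) + (P n t g - P m t g)‖ + ‖P m t (f - g)‖ := norm_sub_le _ _
      _ ≤ ‖P n t (f - g)‖ + ‖P n t g - P m t g‖ + ‖P m t (f - g)‖ := by
          linarith [norm_add_le (P n t (f - g)) (P n t g - P m t g)]
      _ ≤ ε := by linarith [hbnd n, hbnd m]
  -- step 4: existence of limits
  have hEx : ∀ (t : ℝ) (f : Z), ∃ y, Tendsto (fun k => P k (max t 0) f) atTop (nhds y) := by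
    intro t f
    apply cauchySeq_tendsto_of_complete
    rw [Metric.cauchySeq_iff]
    intro ε hε
    obtain ⟨N, hN⟩ := hCuAll f (max t 0 + 1) (by positivity) (ε/2) (half_pos hε)
    refine ⟨N, fun k hk l hl => ?_⟩
    have hmem : max t 0 ∈ Set.Icc (0:ℝ) (max t 0 + 1) := ⟨le_max_right _ _, by linarith⟩
    have := hN k hk l hl (max t 0) hmem
    rw [dist_eq_norm]
    linarith
  choose L hL using hEx
  have hconv : ∀ t, 0 ≤ t → ∀ f, Tendsto (fun k => P k t f) atTop (nhds (L t f)) := by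
    intro t ht f
    have := hL t f
    rwa [max_eq_left ht] at this
  have hLadd : ∀ t (f g : Z), L t (f + g) = L t f + L t g := by
    intro t f g
    refine tendsto_nhds_unique (hL t (f + g)) ?_
    have := (hL t f).add (hL t g)
    simpa [map_add] using this
  have hLsmul : ∀ t (c : ℝ) (f : Z), L t (c • f) = c • L t f := by
    intro t c f
    refine tendsto_nhds_unique (hL t (c • f)) ?_
    have := (hL t f).const_smul c
    simpa [_root_.map_smul] using this
  have hLbd : ∀ t (f : Z), ‖L t f‖ ≤ M * Real.exp (ω * max t 0) * ‖f‖ := by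
    intro t f
    refine le_of_tendsto (hL t f).norm (Filter.Eventually.of_forall fun k => ?_)
    calc ‖P k (max t 0) f‖ ≤ ‖P k (max t 0)‖ * ‖f‖ := (P k _).le_opNorm f
      _ ≤ M * Real.exp (ω * max t 0) * ‖f‖ :=
          mul_le_mul_of_nonneg_right (hgb k _ (le_max_right _ _)) (norm_nonneg f)
  refine ⟨fun t => LinearMap.mkContinuous
    { toFun := L t, map_add' := hLadd t, map_smul' := hLsmul t }
    (M * Real.exp (ω * max t 0)) (hLbd t), ?_, ?_, ?_, ?_, ?_, ?_⟩
  -- uniform convergence (used twice below, proved first as `hunif`)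
  case _ => -- Pinf 0 = id
    ext f
    show L 0 f = f
    refine tendsto_nhds_unique (hconv 0 le_rfl f) ?_
    have : (fun k : ℕ => P k 0 f) = fun _ => f := funext fun k => by rw [hid k]; rfl
    rw [this]
    exact tendsto_const_nhds
  case _ => -- semigroup law
    intro s t hs ht0
    ext f
    show L (t + s) f = L t (L s f)
    refine tendsto_nhds_unique (hconv (t + s) (by linarith) f) ?_
    have hrw : (fun k => P k (t + s) f)
        = fun k => P k t (P k s f - L s f) + P k t (L s f) := by
      funext k
      rw [hlaw k s t hs ht0]
      show P k t (P k s f) = _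
      rw [← map_add]
      congr 1
      abel
    rw [hrw]
    have h1 : Tendsto (fun k => P k t (P k s f - L s f)) atTop (nhds 0) := by
      apply squeeze_zero_norm (a := fun k => (M * Real.exp (|ω| * t)) * ‖P k s f - L s f‖)
      · intro k
        exact le_trans ((P k t).le_opNorm _) (mul_le_mul_of_nonneg_right
          (aux_opbd P M ω hM0 hgb k ht0 le_rfl) (norm_nonneg _))
      · have h0 : Tendsto (fun k => P k s f - L s f) atTop (nhds 0) := by
          have := (hconv s hs f).sub (tendsto_const_nhds (x := L s f))
          simpa using this
        have := (tendsto_zero_iff_norm_tendsto_zero.1 h0).const_mul (M * Real.exp (|ω| * t))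
        simpa using this
    have h2 : Tendsto (fun k => P k t (L s f)) atTop (nhds (L t (L s f))) :=
      hconv t ht0 (L s f)
    simpa using h1.add h2
  case _ => -- strong continuity at 0+
    intro f
    rw [Metric.tendsto_nhdsWithin_nhds]
    intro ε hε
    -- uniform convergence on [0,1]
    obtain ⟨N, hN⟩ := hCuAll f 1 one_pos (ε/4) (by linarith)
    have hNunif : ∀ t ∈ Set.Icc (0:ℝ) 1, ‖P N t f - L t f‖ ≤ ε/4 := by
      intro t htm
      have htt : Tendsto (fun m => ‖P N t f - P m t f‖) atTop
          (nhds ‖P N t f - L t f‖) :=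
        (tendsto_const_nhds.sub (hconv t htm.1 f)).norm
      exact le_of_tendsto htt (eventually_atTop.2
        ⟨N, fun m hm => hN N le_rfl m hm t htm⟩)
    obtain ⟨δ₁, hδ₁, hδ⟩ := Metric.tendsto_nhdsWithin_nhds.1 (hcont N f) (ε/4) (by linarith)
    refine ⟨min δ₁ 1, lt_min hδ₁ one_pos, fun x hx hd => ?_⟩
    have hx0 : (0:ℝ) < x := hx
    have hdx : |x| < min δ₁ 1 := by simpa [Real.dist_eq] using hd
    have hx1 : x ≤ 1 := le_of_lt (lt_of_le_of_lt (le_abs_self x)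
      (lt_of_lt_of_le hdx (min_le_right _ _)))
    have h1 : ‖P N x f - L x f‖ ≤ ε/4 := hNunif x ⟨hx0.le, hx1⟩
    have h2 : dist (P N x f) f < ε/4 :=
      hδ hx (lt_of_lt_of_le hd (by simp [min_le_left]))
    show dist (L x f) f < ε
    calc dist (L x f) f ≤ dist (L x f) (P N x f) + dist (P N x f) f := dist_triangle _ _ _
      _ < ε/4 + ε/4 := by
          apply add_lt_add_of_le_of_lt _ h2
          rw [dist_eq_norm, norm_sub_rev]
          exact h1
      _ < ε := by linarith
  case _ => -- growth bound
    intro t ht0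
    apply ContinuousLinearMap.opNorm_le_bound _ (by positivity)
    intro f
    have := hLbd t f
    rw [max_eq_left ht0] at this
    exact this
  case _ => -- uniform convergence on compacts
    intro f T hT ε hε
    obtain ⟨N, hN⟩ := hCuAll f T hT ε hε
    refine ⟨N, fun n hn t htm => ?_⟩
    show ‖P n t f - L t f‖ ≤ ε
    have htt : Tendsto (fun m => ‖P n t f - P m t f‖) atTop
        (nhds ‖P n t f - L t f‖) :=
      (tendsto_const_nhds.sub (hconv t htm.1 f)).norm
    exact le_of_tendsto htt (eventually_atTop.2 ⟨N, fun m hm => hN n hn m hm t htm⟩)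
  case _ => -- generalized Feller / positivity
    intro X _ ρ ι hadm hιadd hιsmul hιmem hινorm hιsurj hιpos t ht0 f hf x
    show 0 ≤ ι (L t f) x
    have hρ : ∀ y, 0 < ρ y := hadm.1
    have habs : ∀ g : Z, |ι g x| ≤ ‖g‖ * ρ x := by
      intro g
      obtain ⟨⟨Cg, hCg⟩, -⟩ := hιmem g
      have hbdd : BddAbove (Set.range fun y => (ρ y)⁻¹ * |ι g y|) := by
        refine ⟨Cg, ?_⟩
        rintro r ⟨y, rfl⟩
        calc (ρ y)⁻¹ * |ι g y| ≤ (ρ y)⁻¹ * (Cg * ρ y) :=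
              mul_le_mul_of_nonneg_left (hCg y) (inv_nonneg.2 (hρ y).le)
          _ = Cg := by
              rw [mul_comm Cg (ρ y), ← mul_assoc, inv_mul_cancel₀ (hρ y).ne', one_mul]
      have hle : (ρ x)⁻¹ * |ι g x| ≤ GenFeller.rnorm ρ (ι g) :=
        le_csSup hbdd ⟨x, rfl⟩
      rw [hινorm] at hle
      have := mul_le_mul_of_nonneg_left hle (hρ x).le
      rwa [← mul_assoc, mul_inv_cancel₀ (hρ x).ne', one_mul, mul_comm (ρ x)] at this
    have hposn : ∀ k : ℕ, -(‖L t f - P k t f‖ * ρ x) ≤ ι (L t f) x := by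
      intro k
      have hsplit : L t f = P k t f + (L t f - P k t f) := by abel
      have heq : ι (L t f) x = ι (P k t f) x + ι (L t f - P k t f) x := by
        conv_lhs => rw [hsplit]
        rw [hιadd]
        rfl
      rw [heq]
      have h1 : 0 ≤ ι (P k t f) x := hιpos k t ht0 f hf x
      have h2 : -(‖L t f - P k t f‖ * ρ x) ≤ ι (L t f - P k t f) x :=
        (neg_le_neg (habs _)).trans (neg_abs_le _)
      linarith
    have hten : Tendsto (fun k => -(‖L t f - P k t f‖ * ρ x)) atTop (nhds 0) := by
      have h0 : Tendsto (fun k => L t f - P k t f) atTop (nhds 0) := by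
        have := (tendsto_const_nhds (x := L t f)).sub (hconv t ht0 f)
        simpa using this
      have := ((tendsto_zero_iff_norm_tendsto_zero.1 h0).mul_const (ρ x)).neg
      simpa using this
    exact le_of_tendsto hten (Filter.Eventually.of_forall hposn)
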